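/- Let k ≥ 2 be an integer and 1 < p ≤ π²(k − 1/2)² − 1. Then the function ψ_k(x) := sin^p(πx)(1/(k−x)^p + 1/(k+x−1)^p) is decreasing on the interval [1/2, 1]. -/

import Mathlib

open Real

set_option maxHeartbeats 1000000 in
lemma diamond {c m u P : ℝ} (hc : 9.86 ≤ c) (hm : 3/2 ≤ m) (hu : 0 < u) (hu2 : c*u ≤ 1)
    (hP1 : c*(m-u)^2 ≤ P) :
    (P+1)*(2*m+u)*((m-u)+2*u*P) ≤ (P^2*(m-u) + ((m-u)+2*u*P))*(m+u) := by
  have hu1 : u ≤ 1/9.86 := by nlinarith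
  have ha : (1:ℝ) ≤ m - u := by nlinarith
  have hP0 : (19:ℝ) ≤ P := by nlinarith [sq_nonneg (m-u-1.39)]
  have hq : (0.7:ℝ)*m^2 ≤ m^2-4*m*u-3*u^2 := by nlinarith
  have hq0 : (0:ℝ) ≤ m^2-4*m*u-3*u^2 := by nlinarith
  have key : m*(m-u) + 19*(2*u*m + (2*m+u)*(m-u)) ≤ 19*(c*(m-u)^2*(m^2-4*m*u-3*u^2)) := by
    have h1 : 6.9*((m-u)^2*m^2) ≤ c*(m-u)^2*(m^2-4*m*u-3*u^2) := by
      nlinarith [mul_le_mul_of_nonneg_left hq (by positivity : (0:ℝ) ≤ 9.86*(m-u)^2),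
        mul_nonneg (mul_nonneg (by linarith : (0:ℝ) ≤ c - 9.86) (by positivity : (0:ℝ) ≤ (m-u)^2)) hq0]
    have h3 : m^2 ≤ (m-u)^2*m^2 := by
      nlinarith [mul_le_mul_of_nonneg_right (by nlinarith : (1:ℝ) ≤ (m-u)^2) (by positivity : (0:ℝ) ≤ m^2)]
    nlinarith
  have key2 : m*(m-u) + 2*u*P*m + P*(2*m+u)*(m-u) ≤ P^2*(m^2-4*m*u-3*u^2) := by
    have h4 := mul_le_mul_of_nonneg_left key (by linarith : (0:ℝ) ≤ P)
    have h5 : P*(19*(c*(m-u)^2*(m^2-4*m*u-3*u^2))) ≤ 19*(P*P*(m^2-4*m*u-3*u^2)) := by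
      nlinarith [mul_le_mul_of_nonneg_right hP1 hq0]
    have h6 : 19*(m*(m-u)) ≤ P*(m*(m-u)) :=
      mul_le_mul_of_nonneg_right hP0 (by nlinarith)
    nlinarith [h4, h5, h6]
  nlinarith [key2]

set_option maxHeartbeats 1000000 in
lemma E_nonneg {m u P : ℝ} (hm : 3/2 ≤ m) (hu : 0 < u) (hu2 : π^2*u ≤ 1)
    (hP1 : 2 < P) (hP2 : P ≤ π^2*m^2) :
    P * ((m-u)^(-(P+1)) + (m+u)^(-(P+1)))
      ≤ π^2 * (((m-u)^(1-P) + (m+u)^(1-P)) + P*u*((m-u)^(-P) - (m+u)^(-P))) := by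
  have hc : (9.86:ℝ) ≤ π^2 := by nlinarith [pi_gt_d6]
  have hu1 : u < 1/2 := by nlinarith
  have ha1 : (1:ℝ) ≤ m - u := by nlinarith
  have ha : (0:ℝ) < m - u := by linarith
  have hb : (0:ℝ) < m + u := by linarith
  have hab : m - u ≤ m + u := by linarith
  obtain ⟨X, hX_def⟩ : ∃ r : ℝ, r = (m-u) ^ (-(P+1)) := ⟨_, rfl⟩
  obtain ⟨Y, hY_def⟩ : ∃ r : ℝ, r = (m+u) ^ (-(P+1)) := ⟨_, rfl⟩
  have hX : 0 < X := hX_def ▸ rpow_pos_of_pos ha _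
  have hY : 0 < Y := hY_def ▸ rpow_pos_of_pos hb _
  rw [← hX_def, ← hY_def]
  have ia1 : (m-u) ^ (1-P) = X * (m-u) * (m-u) := by
    rw [hX_def, show (1-P) = -(P+1) + 1 + 1 by ring, rpow_add ha, rpow_add ha, rpow_one]
  have ib1 : (m+u) ^ (1-P) = Y * (m+u) * (m+u) := by
    rw [hY_def, show (1-P) = -(P+1) + 1 + 1 by ring, rpow_add hb, rpow_add hb, rpow_one]
  have ia2 : (m-u) ^ (-P) = X * (m-u) := by
    rw [hX_def, show (-P) = -(P+1) + 1 by ring, rpow_add ha, rpow_one]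
  have ib2 : (m+u) ^ (-P) = Y * (m+u) := by
    rw [hY_def, show (-P) = -(P+1) + 1 by ring, rpow_add hb, rpow_one]
  rw [ia1, ib1, ia2, ib2]
  -- goal now in X Y form
  have hD : Y * (m+u) ≤ X * (m-u) := by
    rw [← ia2, ← ib2]; exact rpow_le_rpow_of_nonpos ha hab (by linarith)
  rcases le_or_gt P (π^2*(m-u)^2) with hcase | hcase
  · nlinarith [mul_nonneg (sub_nonneg.2 hcase) hX.le, mul_nonneg (sub_nonneg.2 hcase) hY.le,
      mul_nonneg (mul_nonneg (sq_nonneg π) hY.le) (by nlinarith : (0:ℝ) ≤ (m+u)*(m+u) - (m-u)*(m-u)),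
      mul_nonneg (mul_nonneg (mul_nonneg (sq_nonneg π) (by linarith : (0:ℝ) ≤ P)) hu.le)
        (sub_nonneg.2 hD)]
  · obtain ⟨ρ, hρ_def⟩ : ∃ r : ℝ, r = ((m-u)/(m+u)) ^ P := ⟨_, rfl⟩
    obtain ⟨σ, hσ_def⟩ : ∃ r : ℝ, r = ((m-u)/(m+u)) ^ (P+1) := ⟨_, rfl⟩
    have hρpos : 0 < ρ := hρ_def ▸ rpow_pos_of_pos (div_pos ha hb) _
    have hσρ : σ * (m+u) = ρ * (m-u) := by
      rw [hσ_def, hρ_def, rpow_add (div_pos ha hb), rpow_one]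
      field_simp
    have hpowa : (0:ℝ) < (m-u)^(P+1) := rpow_pos_of_pos ha _
    have hpowb : (0:ℝ) < (m+u)^(P+1) := rpow_pos_of_pos hb _
    have hYX : Y = X * σ := by
      rw [hY_def, hX_def, hσ_def, div_rpow ha.le hb.le, rpow_neg ha.le, rpow_neg hb.le]
      field_simp
    have hber2 : ρ * ((m-u) + 2*u*P) ≤ m - u := by
      have h1 : 1 + P*(2*u/(m-u)) ≤ (1 + 2*u/(m-u))^P :=
        one_add_mul_self_le_rpow_one_add
          (by have : (0:ℝ) ≤ 2*u/(m-u) := by positivity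
              linarith) (by linarith)
      have h2 : (1 : ℝ) + 2*u/(m-u) = (m+u)/(m-u) := by field_simp; ring
      rw [h2] at h1
      have h3 : ρ * (((m+u)/(m-u))^P) = 1 := by
        have hprod : ((m-u)/(m+u)) * ((m+u)/(m-u)) = 1 := by field_simp
        rw [hρ_def, ← mul_rpow (by positivity) (by positivity), hprod, one_rpow]
      have h4 := mul_le_mul_of_nonneg_left h1 hρpos.le
      rw [h3] at h4
      have h7 := mul_le_mul_of_nonneg_right h4 ha.le
      have h8 : (ρ * (1 + P*(2*u/(m-u))))*(m-u) = ρ * ((m-u) + 2*u*P) := by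
        field_simp
      rw [h8, one_mul] at h7
      exact h7
    have hber1 : (m+u) - 2*u*(P+1) ≤ σ * (m+u) := by
      have h1 : 1 + (P+1)*(-(2*u)/(m+u)) ≤ (1 + -(2*u)/(m+u))^(P+1) :=
        one_add_mul_self_le_rpow_one_add
          (by rw [neg_div]
              have : (2*u)/(m+u) ≤ 1 := by rw [div_le_one hb]; linarith
              linarith) (by linarith)
      have h2 : (1 : ℝ) + -(2*u)/(m+u) = (m-u)/(m+u) := by field_simp; ring
      rw [h2, ← hσ_def] at h1
      have h6 := mul_le_mul_of_nonneg_right h1 hb.le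
      calc (m+u) - 2*u*(P+1) = (1 + (P+1)*(-(2*u)/(m+u))) * (m+u) := by field_simp; ring
        _ ≤ σ * (m+u) := h6
    have hdia := diamond hc hm hu hu2 hcase.le
    have hρ1 : ρ ≤ 1 := by nlinarith [hber2, mul_nonneg hρpos.le (by positivity : (0:ℝ) ≤ 2*u*P)]
    have hscal : (2*m-u) ≤ σ*(2*m+u) + P*((m-u)*(1-ρ)) := by
      have hw : (0:ℝ) < (m-u) + 2*u*P := by nlinarith
      have hbw : (0:ℝ) < (m+u)*((m-u)+2*u*P) := by positivity
      have A1 := mul_le_mul_of_nonneg_right hber1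
        (by nlinarith : (0:ℝ) ≤ (2*m+u)*((m-u)+2*u*P))
      have A2 : 2*u*P*(P*((m-u)*(m+u))) ≤ ((1-ρ)*((m-u)+2*u*P))*(P*((m-u)*(m+u))) := by
        have h6 : 2*u*P ≤ (1-ρ)*((m-u)+2*u*P) := by nlinarith
        exact mul_le_mul_of_nonneg_right h6 (by positivity)
      have A3 := mul_le_mul_of_nonneg_left hdia (by linarith : (0:ℝ) ≤ 2*u)
      have hmul : (2*m-u)*((m+u)*((m-u)+2*u*P))
          ≤ (σ*(2*m+u) + P*((m-u)*(1-ρ)))*((m+u)*((m-u)+2*u*P)) := by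
        nlinarith [A1, A2, A3]
      exact le_of_mul_le_mul_right (by linarith [hmul]) hbw
    have hP2' := mul_le_mul_of_nonneg_right hP2 (by positivity : (0:ℝ) ≤ X + Y)
    have hWmul : (π^2*u) * (X*(2*m-u)) ≤ (π^2*u) * (X*(σ*(2*m+u) + P*((m-u)*(1-ρ)))) := by
      apply mul_le_mul_of_nonneg_left _ (by positivity)
      exact mul_le_mul_of_nonneg_left hscal hX.le
    have hYb : Y * (m+u) = X * (ρ * (m-u)) := by rw [hYX, mul_assoc, hσρ]
    have e1 : π^2*u*(Y*(2*m+u)) = π^2*u*((X*σ)*(2*m+u)) := by rw [← hYX]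
    have e2 : π^2*u*(P*(Y*(m+u))) = π^2*u*(P*(X*(ρ*(m-u)))) := by rw [hYb]
    nlinarith [hP2', hWmul, e1, e2]

-- sin θ ≥ θ cos θ for 0 ≤ θ < π/2
lemma mul_cos_le_sin {θ : ℝ} (h1 : 0 ≤ θ) (h2 : θ < π/2) : θ * Real.cos θ ≤ Real.sin θ := by
  rcases eq_or_lt_of_le h1 with h | h
  · simp [← h]
  · have hc : 0 < Real.cos θ := Real.cos_pos_of_mem_Ioo ⟨by linarith [Real.pi_pos], h2⟩
    have := Real.lt_tan h h2
    rw [Real.tan_eq_sin_div_cos, lt_div_iff₀ hc] at this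
    linarith

set_option maxHeartbeats 1000000 in
lemma core {m t P : ℝ} (hm : 3/2 ≤ m) (ht0 : 0 < t) (ht : t < 1/2)
    (hP1 : 2 < P) (hP2 : P ≤ π^2*m^2) :
    Real.cos (π*t) * ((m-t)^(-P) - (m+t)^(-P))
      ≤ π * Real.sin (π*t) * ((m-t)^(1-P) + (m+t)^(1-P)) := by
  have hπ := Real.pi_pos
  have ha1 : (1:ℝ) ≤ m - t := by linarith
  have ha : (0:ℝ) < m - t := by linarith
  have hb : (0:ℝ) < m + t := by linarith
  have hπt2 : π*t < π/2 := by nlinarith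
  have hcos : 0 < Real.cos (π*t) := Real.cos_pos_of_mem_Ioo ⟨by nlinarith, hπt2⟩
  have hsin : 0 < Real.sin (π*t) := Real.sin_pos_of_pos_of_lt_pi (by positivity) (by nlinarith)
  rcases le_or_gt 1 (π^2*t) with hA | hB
  · -- easy region
    have htan := Real.lt_tan (by positivity) hπt2
    rw [Real.tan_eq_sin_div_cos, lt_div_iff₀ hcos] at htan
    have f5 : Real.cos (π*t) ≤ π * Real.sin (π*t) := by nlinarith
    have f1 : (m-t)^(-P) ≤ (m-t)^(1-P) :=
      rpow_le_rpow_of_exponent_le ha1 (by linarith)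
    have f2 : (0:ℝ) < (m+t)^(-P) := rpow_pos_of_pos hb _
    have f3 : (0:ℝ) < (m+t)^(1-P) := rpow_pos_of_pos hb _
    have f4 : (0:ℝ) < (m-t)^(1-P) := rpow_pos_of_pos ha _
    nlinarith [mul_le_mul_of_nonneg_left f1 hcos.le,
      mul_le_mul_of_nonneg_right f5 f4.le,
      mul_nonneg hcos.le f2.le, mul_nonneg (by positivity : (0:ℝ) ≤ π * Real.sin (π*t)) f3.le]
  · -- hard region : monotonicity of g
    set g : ℝ → ℝ := fun u => π * Real.sin (π*u) * ((m-u)^(1-P) + (m+u)^(1-P))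
        - Real.cos (π*u) * ((m-u)^(-P) - (m+u)^(-P)) with hg_def
    have hderiv : ∀ u ∈ Set.Icc (0:ℝ) t, HasDerivAt g
        (π^2*Real.cos (π*u) * ((m-u)^(1-P)+(m+u)^(1-P))
          + π*Real.sin (π*u) * (P*((m-u)^(-P) - (m+u)^(-P)))
          - P*Real.cos (π*u) * ((m-u)^(-(P+1)) + (m+u)^(-(P+1)))) u := by
      intro u hu
      obtain ⟨hu0, hut⟩ := hu
      have hau : (0:ℝ) < m - u := by linarith
      have hbu : (0:ℝ) < m + u := by linarith
      have h_inner : HasDerivAt (fun x : ℝ => π * x) π u := by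
        simpa using (hasDerivAt_id u).const_mul π
      have hsin' : HasDerivAt (fun x => Real.sin (π*x)) (Real.cos (π*u) * π) u :=
        (Real.hasDerivAt_sin (π*u)).comp u h_inner
      have hcos' : HasDerivAt (fun x => Real.cos (π*x)) (-Real.sin (π*u) * π) u :=
        (Real.hasDerivAt_cos (π*u)).comp u h_inner
      have hma : HasDerivAt (fun x : ℝ => m - x) (-1) u := by
        simpa using (hasDerivAt_id u).const_sub m
      have hmb : HasDerivAt (fun x : ℝ => m + x) 1 u := by
        simpa using (hasDerivAt_id u).const_add m
      have hpa1 := hma.rpow_const (p := 1-P) (Or.inl hau.ne')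
      have hpb1 := hmb.rpow_const (p := 1-P) (Or.inl hbu.ne')
      have hpa2 := hma.rpow_const (p := -P) (Or.inl hau.ne')
      have hpb2 := hmb.rpow_const (p := -P) (Or.inl hbu.ne')
      have hbig := ((hsin'.const_mul π).mul (hpa1.add hpb1)).sub (hcos'.mul (hpa2.sub hpb2))
      apply hbig.congr_deriv
      simp only [show (1:ℝ)-P-1 = -P from by ring, show -P-1 = -(P+1) from by ring,
        Pi.add_apply, Pi.sub_apply]
      ring
    have hmono : MonotoneOn g (Set.Icc 0 t) := by
      apply monotoneOn_of_deriv_nonneg (convex_Icc 0 t)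
      · exact fun u hu => ((hderiv u hu).continuousAt).continuousWithinAt
      · intro u hu
        rw [interior_Icc] at hu
        exact ((hderiv u ⟨hu.1.le, hu.2.le⟩).differentiableAt).differentiableWithinAt
      · intro u hu
        rw [interior_Icc] at hu
        rw [(hderiv u ⟨hu.1.le, hu.2.le⟩).deriv]
        obtain ⟨hu0, hut⟩ := hu
        have hau : (0:ℝ) < m - u := by linarith
        have hbu : (0:ℝ) < m + u := by linarith
        have hπu2 : π*u < π/2 := by nlinarith
        have hcosu : 0 < Real.cos (π*u) := Real.cos_pos_of_mem_Ioo ⟨by nlinarith, hπu2⟩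
        have hsinu := mul_cos_le_sin (by positivity : (0:ℝ) ≤ π*u) hπu2
        have hDu : (m+u)^(-P) ≤ (m-u)^(-P) :=
          rpow_le_rpow_of_nonpos hau (by linarith) (by linarith)
        have hE := E_nonneg hm hu0 (by nlinarith : π^2*u ≤ 1) hP1 hP2
        have c1 := mul_le_mul_of_nonneg_left hE hcosu.le
        have c2 := mul_le_mul_of_nonneg_right hsinu
          (mul_nonneg (mul_nonneg Real.pi_pos.le (by linarith : (0:ℝ) ≤ P)) (sub_nonneg.2 hDu))
        linarith [c1, c2]
    have hg0 : g 0 = 0 := by simp [hg_def]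
    have := hmono (Set.left_mem_Icc.2 ht0.le) (Set.right_mem_Icc.2 ht0.le) ht0.le
    rw [hg0] at this
    rw [hg_def] at this
    simp only at this
    linarith

set_option maxHeartbeats 1000000 in
theorem psi_decreasing (k : ℕ) (hk : 2 ≤ k) (p : ℝ) (hp1 : 1 < p)
    (hp2 : p ≤ π ^ 2 * ((k : ℝ) - 1/2) ^ 2 - 1) :
    AntitoneOn (fun x : ℝ =>
        Real.sin (π * x) ^ p * (1 / ((k : ℝ) - x) ^ p + 1 / ((k : ℝ) + x - 1) ^ p))
      (Set.Icc (1/2 : ℝ) 1) := by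
  have hπ := Real.pi_pos
  have hk2 : (2:ℝ) ≤ (k:ℝ) := by exact_mod_cast hk
  have hp0 : (0:ℝ) < p := by linarith
  have hder : ∀ x ∈ Set.Ioo (1/2:ℝ) 1, HasDerivAt (fun y : ℝ =>
        Real.sin (π * y) ^ p * (1 / ((k : ℝ) - y) ^ p + 1 / ((k : ℝ) + y - 1) ^ p))
        (Real.cos (π*x) * π * p * Real.sin (π*x) ^ (p-1) *
            (1 / ((k:ℝ)-x)^p + 1 / ((k:ℝ)+x-1)^p)
          + Real.sin (π*x)^p *
            ((0 * ((k:ℝ)-x)^p - 1 * (-1 * p * ((k:ℝ)-x)^(p-1))) / (((k:ℝ)-x)^p)^2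
              + (0 * ((k:ℝ)+x-1)^p - 1 * (1 * p * ((k:ℝ)+x-1)^(p-1))) / (((k:ℝ)+x-1)^p)^2)) x := by
    intro x hx
    obtain ⟨hx1, hx2⟩ := hx
    have hax : (0:ℝ) < (k:ℝ) - x := by linarith
    have hbx : (0:ℝ) < (k:ℝ) + x - 1 := by linarith
    have hs_pos : 0 < Real.sin (π*x) := by
      apply Real.sin_pos_of_pos_of_lt_pi <;> nlinarith
    have h_inner : HasDerivAt (fun y : ℝ => π * y) π x := by
      simpa using (hasDerivAt_id x).const_mul π
    have hsin' : HasDerivAt (fun y => Real.sin (π*y)) (Real.cos (π*x) * π) x :=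
      (Real.hasDerivAt_sin (π*x)).comp x h_inner
    have h1 := hsin'.rpow_const (p := p) (Or.inl hs_pos.ne')
    have hka : HasDerivAt (fun y : ℝ => (k:ℝ) - y) (-1) x := by
      simpa using (hasDerivAt_id x).const_sub (k:ℝ)
    have hkb : HasDerivAt (fun y : ℝ => (k:ℝ) + y - 1) 1 x := by
      simpa using ((hasDerivAt_id x).const_add (k:ℝ)).sub_const 1
    have hA := hka.rpow_const (p := p) (Or.inl hax.ne')
    have hB := hkb.rpow_const (p := p) (Or.inl hbx.ne')
    have hinvA := (hasDerivAt_const x (1:ℝ)).div hA (rpow_pos_of_pos hax p).ne'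
    have hinvB := (hasDerivAt_const x (1:ℝ)).div hB (rpow_pos_of_pos hbx p).ne'
    exact h1.mul (hinvA.add hinvB)
  apply antitoneOn_of_deriv_nonpos (convex_Icc _ _)
  · -- continuity
    apply ContinuousOn.mul
    · exact (Real.continuous_sin.comp (continuous_const.mul continuous_id)).continuousOn.rpow_const
        (fun x _ => Or.inr hp0.le)
    · apply ContinuousOn.add
      · apply ContinuousOn.div continuousOn_const
          (((continuous_const.sub continuous_id).continuousOn).rpow_const (fun x hx => Or.inr hp0.le))
        intro x hx
        have : (0:ℝ) < (k:ℝ) - x := by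
          simp only [Set.mem_Icc] at hx; linarith [hx.2]
        exact (rpow_pos_of_pos this p).ne'
      · apply ContinuousOn.div continuousOn_const
          ((((continuous_const.add continuous_id).sub continuous_const).continuousOn).rpow_const
            (fun x hx => Or.inr hp0.le))
        intro x hx
        have : (0:ℝ) < (k:ℝ) + x - 1 := by
          simp only [Set.mem_Icc] at hx; linarith [hx.1]
        exact (rpow_pos_of_pos this p).ne'
  · intro x hx
    rw [interior_Icc] at hx
    exact ((hder x hx).differentiableAt).differentiableWithinAt
  · intro x hx
    rw [interior_Icc] at hx
    rw [(hder x hx).deriv]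
    obtain ⟨hx1, hx2⟩ := hx
    have hax : (0:ℝ) < (k:ℝ) - x := by linarith
    have hbx : (0:ℝ) < (k:ℝ) + x - 1 := by linarith
    have hs_pos : 0 < Real.sin (π*x) := by
      apply Real.sin_pos_of_pos_of_lt_pi <;> nlinarith
    -- simplify the derivative expression
    have eA : (0 * ((k:ℝ)-x)^p - 1 * (-1 * p * ((k:ℝ)-x)^(p-1))) / (((k:ℝ)-x)^p)^2
        = p * ((k:ℝ)-x)^(-(p+1)) := by
      rw [show -(p+1) = (p-1) - (p+p) from by ring, Real.rpow_sub hax (p-1) (p+p),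
        Real.rpow_add hax p p]
      have hne := (rpow_pos_of_pos hax p).ne'
      field_simp
      ring
    have eB : (0 * ((k:ℝ)+x-1)^p - 1 * (1 * p * ((k:ℝ)+x-1)^(p-1))) / (((k:ℝ)+x-1)^p)^2
        = -(p * ((k:ℝ)+x-1)^(-(p+1))) := by
      rw [show -(p+1) = (p-1) - (p+p) from by ring, Real.rpow_sub hbx (p-1) (p+p),
        Real.rpow_add hbx p p]
      have hne := (rpow_pos_of_pos hbx p).ne'
      field_simp
      ring
    have eCa : 1 / ((k:ℝ)-x)^p = ((k:ℝ)-x)^(-p) := by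
      rw [one_div, ← Real.rpow_neg hax.le]
    have eCb : 1 / ((k:ℝ)+x-1)^p = ((k:ℝ)+x-1)^(-p) := by
      rw [one_div, ← Real.rpow_neg hbx.le]
    have es : Real.sin (π*x)^(p-1) * Real.sin (π*x) = Real.sin (π*x)^p := by
      nth_rewrite 2 [← Real.rpow_one (Real.sin (π*x))]
      rw [← Real.rpow_add hs_pos]
      norm_num
    rw [eA, eB, eCa, eCb]
    -- core inequality
    have hm' : (3/2:ℝ) ≤ (k:ℝ) - 1/2 := by linarith
    have hcore := core (m := (k:ℝ)-1/2) (t := x-1/2) (P := p+1) hm'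
      (by linarith) (by linarith) (by linarith) (by nlinarith)
    rw [show (k:ℝ)-1/2-(x-1/2) = (k:ℝ)-x from by ring,
        show (k:ℝ)-1/2+(x-1/2) = (k:ℝ)+x-1 from by ring,
        show 1-(p+1) = -p from by ring] at hcore
    have etrig1 : Real.sin (π*(x-1/2)) = -Real.cos (π*x) := by
      rw [show π*x = π*(x-1/2) + π/2 from by ring, Real.cos_add_pi_div_two]; ring
    have etrig2 : Real.cos (π*(x-1/2)) = Real.sin (π*x) := by
      rw [show π*x = π*(x-1/2) + π/2 from by ring, Real.sin_add_pi_div_two]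
    rw [etrig1, etrig2] at hcore
    -- assemble
    have hsp1 : (0:ℝ) < Real.sin (π*x)^(p-1) := rpow_pos_of_pos hs_pos _
    have hfactor : Real.cos (π*x) * π * p * Real.sin (π*x)^(p-1) *
          (((k:ℝ)-x)^(-p) + ((k:ℝ)+x-1)^(-p))
        + Real.sin (π*x)^p * (p * ((k:ℝ)-x)^(-(p+1)) + -(p * ((k:ℝ)+x-1)^(-(p+1))))
        = p * Real.sin (π*x)^(p-1) *
          (π * Real.cos (π*x) * (((k:ℝ)-x)^(-p) + ((k:ℝ)+x-1)^(-p))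
            + Real.sin (π*x) * (((k:ℝ)-x)^(-(p+1)) - ((k:ℝ)+x-1)^(-(p+1)))) := by
      rw [← es]; ring
    rw [hfactor]
    have hbr : π * Real.cos (π*x) * (((k:ℝ)-x)^(-p) + ((k:ℝ)+x-1)^(-p))
        + Real.sin (π*x) * (((k:ℝ)-x)^(-(p+1)) - ((k:ℝ)+x-1)^(-(p+1))) ≤ 0 := by
      nlinarith [hcore]
    have hnn : (0:ℝ) ≤ p * Real.sin (π*x)^(p-1) := by positivity
    exact mul_nonpos_of_nonneg_of_nonpos hnn hbr
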